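/- Let X be a set and f : X → X a map such that, for every positive integer n, the set Fix(f^n) of fixed points of the n-th iterate of f is finite. Then for every positive integer n, the integer n divides Σ_{d | n} μ(n/d)·|Fix(f^d)|, where μ is the Möbius function and the sum is over the positive divisors d of n. (Indeed this sum equals n times the number of orbits of f of exact size n.) -/

import Mathlib

open Function

/-- The number of points of exact minimal period `n` is divisible by `n`. -/
lemma aux_dvd_card_minimalPeriod (X : Type*) (f : X → X) (n : ℕ) (hn : 0 < n)
    (hfin : {x : X | f^[n] x = x}.Finite) :
    n ∣ Nat.card {x : X // Function.minimalPeriod f x = n} := by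
  haveI : NeZero n := ⟨hn.ne'⟩
  have hsub : {x : X | Function.minimalPeriod f x = n} ⊆ {x : X | f^[n] x = x} := by
    intro x hx
    have h := Function.iterate_minimalPeriod (f := f) (x := x)
    rw [Set.mem_setOf_eq] at hx
    rw [hx] at h
    exact h
  have hS : {x : X | Function.minimalPeriod f x = n}.Finite := hfin.subset hsub
  haveI : Finite {x : X // Function.minimalPeriod f x = n} := hS.to_subtype
  letI act : AddAction (ZMod n) {x : X // Function.minimalPeriod f x = n} := {
    vadd := fun k x => ⟨f^[k.val] x.1, by
      have hx : x.1 ∈ Function.periodicPts f := by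
        rw [← Function.minimalPeriod_pos_iff_mem_periodicPts, x.2]; exact hn
      rw [Function.minimalPeriod_apply_iterate hx]; exact x.2⟩
    zero_vadd := fun x => Subtype.ext (by
      show f^[(0 : ZMod n).val] x.1 = x.1
      simp [ZMod.val_zero])
    add_vadd := fun a b x => Subtype.ext (by
      show f^[(a + b).val] x.1 = f^[a.val] (f^[b.val] x.1)
      rw [← Function.iterate_add_apply, ZMod.val_add]
      conv_rhs => rw [← Function.iterate_mod_minimalPeriod_eq (n := a.val + b.val)]
      rw [x.2]) }
  have hstab : ∀ x : {x : X // Function.minimalPeriod f x = n},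
      AddAction.stabilizer (ZMod n) x = ⊥ := by
    intro x
    rw [eq_bot_iff]
    intro k hk
    have hk' : f^[k.val] x.1 = x.1 := congrArg Subtype.val (AddAction.mem_stabilizer_iff.mp hk)
    have hdvd : Function.minimalPeriod f x.1 ∣ k.val :=
      Function.isPeriodicPt_iff_minimalPeriod_dvd.mp hk'
    rw [x.2] at hdvd
    have hk0 : k.val = 0 := Nat.eq_zero_of_dvd_of_lt hdvd (ZMod.val_lt k)
    simpa [AddSubgroup.mem_bot] using (ZMod.val_eq_zero k).mp hk0
  -- orbit sizes are all n
  have horb : ∀ x : {x : X // Function.minimalPeriod f x = n},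
      Nat.card (AddAction.orbit (ZMod n) x) = n := by
    intro x
    calc Nat.card (AddAction.orbit (ZMod n) x)
        = Nat.card (ZMod n ⧸ AddAction.stabilizer (ZMod n) x) :=
          Nat.card_congr (AddAction.orbitEquivQuotientStabilizer (ZMod n) x)
      _ = Nat.card (ZMod n) := by
          rw [hstab x]
          exact Nat.card_congr QuotientAddGroup.quotientBot.toEquiv
      _ = n := Nat.card_zmod n
  -- decompose into orbits
  haveI : ∀ ω : AddAction.orbitRel.Quotient (ZMod n) {x : X // Function.minimalPeriod f x = n},
      Finite (AddAction.orbit (ZMod n) ω.out) := fun ω => Subtype.finite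
  haveI : Finite (AddAction.orbitRel.Quotient (ZMod n)
      {x : X // Function.minimalPeriod f x = n}) := Quotient.finite _
  haveI : Fintype (AddAction.orbitRel.Quotient (ZMod n)
      {x : X // Function.minimalPeriod f x = n}) := Fintype.ofFinite _
  have hequiv := AddAction.selfEquivSigmaOrbits (ZMod n)
    {x : X // Function.minimalPeriod f x = n}
  haveI instOrb : ∀ ω : AddAction.orbitRel.Quotient (ZMod n)
      {x : X // Function.minimalPeriod f x = n},
      Fintype (AddAction.orbit (ZMod n) ω.out) := fun ω => Fintype.ofFinite _
  rw [Nat.card_congr hequiv, Nat.card_eq_fintype_card, Fintype.card_sigma]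
  refine Finset.dvd_sum fun ω _ => ?_
  rw [← Nat.card_eq_fintype_card, horb]
theorem moebius_fixed_points_divisible
    (X : Type*) (f : X → X)
    (hfin : ∀ n : ℕ, 0 < n → {x : X | f^[n] x = x}.Finite)
    (n : ℕ) (hn : 0 < n) :
    (n : ℤ) ∣ ∑ d ∈ n.divisors,
      ArithmeticFunction.moebius (n / d) * (Nat.card {x : X // f^[d] x = x} : ℤ) := by
  -- Möbius inversion: the sum equals the number of points of exact period n
  have hinv : ∀ m > 0, ∑ p ∈ m.divisorsAntidiagonal,
      (ArithmeticFunction.moebius p.fst) •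
        ((Nat.card {y : X // f^[p.snd] y = y} : ℤ)) =
      (Nat.card {y : X // Function.minimalPeriod f y = m} : ℤ) := by
    rw [← ArithmeticFunction.sum_eq_iff_sum_smul_moebius_eq
      (f := fun e => (Nat.card {y : X // Function.minimalPeriod f y = e} : ℤ))
      (g := fun d => (Nat.card {y : X // f^[d] y = y} : ℤ))]
    intro m hm
    -- card Fix(f^m) = ∑_{e ∣ m} card {minimalPeriod = e}
    have hFm : {x : X | f^[m] x = x}.Finite := hfin m hm
    have key : (∑ e ∈ m.divisors, Nat.card {y : X // Function.minimalPeriod f y = e}) =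
        Nat.card {y : X // f^[m] y = y} := by
      have hcard : Nat.card {y : X // f^[m] y = y} = hFm.toFinset.card := by
        have h1 : Nat.card {y : X // f^[m] y = y} = ({y : X | f^[m] y = y}).ncard :=
          Nat.card_coe_set_eq _
        rw [h1, Set.ncard_eq_toFinset_card _ hFm]
      rw [hcard]
      rw [Finset.card_eq_sum_card_fiberwise
        (f := fun x => Function.minimalPeriod f x) (t := m.divisors) ?_]
      · refine Finset.sum_congr rfl fun e he => ?_
        obtain ⟨hed, hm0⟩ := Nat.mem_divisors.mp he
        have hset : {y : X | Function.minimalPeriod f y = e} =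
            ↑(hFm.toFinset.filter (fun x => Function.minimalPeriod f x = e)) := by
          ext y
          simp only [Set.mem_setOf_eq, Finset.coe_filter, Set.Finite.mem_toFinset,
            Set.mem_setOf_eq]
          constructor
          · intro hy
            refine ⟨?_, hy⟩
            have : Function.IsPeriodicPt f m y :=
              Function.isPeriodicPt_iff_minimalPeriod_dvd.mpr (hy ▸ hed)
            exact this
          · exact fun h => h.2
        have h2 : Nat.card {y : X // Function.minimalPeriod f y = e} =
            ({y : X | Function.minimalPeriod f y = e}).ncard := Nat.card_coe_set_eq _
        rw [h2, hset, Set.ncard_coe_finset]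
      · intro x hx
        rw [Finset.mem_coe, Set.Finite.mem_toFinset] at hx
        have hper : Function.IsPeriodicPt f m x := hx
        refine Nat.mem_divisors.mpr ⟨Function.isPeriodicPt_iff_minimalPeriod_dvd.mp hper, hm.ne'⟩
    exact_mod_cast key
  have hsum := hinv n hn
  rw [← Nat.sum_divisorsAntidiagonal' (f := fun a b =>
      (ArithmeticFunction.moebius a : ℤ) * (Nat.card {x : X // f^[b] x = x} : ℤ))]
  simp only [zsmul_eq_mul, Int.cast_id] at hsum
  rw [hsum]
  exact Int.natCast_dvd_natCast.mpr (aux_dvd_card_minimalPeriod X f n hn (hfin n hn))
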